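/- Let G(α) = 2(1+α) log(2(1+α)/n₁) + 2(1−α) log(2(1−α)/n₂) where n₁ = (1+α) + s(1−α), n₂ = (1−s)(1−α), for α ∈ (α₀, 1) and a constant s satisfying −(1+α)/(1−α) ≤ s ≤ 1 (so that n₁ ≥ 0, n₂ ≥ 0). Then d³G/dα³ = (8s²/(n₁³(1+α)²))·[(3α+1)s − 3α − 3] ≤ 0, i.e., d²G/dα² is nonincreasing; moreover d²G/dα² at α = 1 equals s² ≥ 0, hence G is convex on the interval. -/

import Mathlib

/-- `n₁ = (1+α) + s(1-α)` along the boundary segment. -/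
noncomputable def n1f (s a : ℝ) : ℝ := (1 + a) + s * (1 - a)

/-- The correction term along the boundary segment of the projected cube. -/
noncomputable def Gf (s a : ℝ) : ℝ :=
  2 * (1 + a) * Real.log (2 * (1 + a) / n1f s a)
    + 2 * (1 - a) * Real.log (2 * (1 - a) / ((1 - s) * (1 - a)))

/-- The second derivative `d²G/dα²`. -/
noncomputable def G2f (s a : ℝ) : ℝ :=
  4 / (2 * (1 + a)) - 2 * (1 - s) / n1f s a - 4 * s * (1 - s) / (n1f s a) ^ 2

/-- The first derivative `dG/dα`. -/
noncomputable def G1f (s a : ℝ) : ℝ :=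
  2 * Real.log (2 * (1 + a) / n1f s a) + 4 * s / n1f s a
    - 2 * Real.log (2 * (1 - a) / ((1 - s) * (1 - a)))

lemma n1f_hasDerivAt (s a : ℝ) : HasDerivAt (n1f s) (1 - s) a := by
  unfold n1f
  have h1 : HasDerivAt (fun a : ℝ => 1 + a) 1 a := by
    simpa using (hasDerivAt_id a).const_add (1 : ℝ)
  have h2 : HasDerivAt (fun a : ℝ => s * (1 - a)) (s * (-1)) a :=
    ((hasDerivAt_id a).const_sub (1 : ℝ)).const_mul s
  have := h1.add h2
  refine this.congr_deriv ?_
  ring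

lemma two_one_add_hasDerivAt (a : ℝ) : HasDerivAt (fun a : ℝ => 2 * (1 + a)) 2 a := by
  have h1 : HasDerivAt (fun a : ℝ => 1 + a) 1 a := by
    simpa using (hasDerivAt_id a).const_add (1 : ℝ)
  simpa using h1.const_mul (2 : ℝ)

lemma G2f_one (s : ℝ) : G2f s 1 = s ^ 2 := by
  simp only [G2f, n1f]
  norm_num
  ring

lemma G2f_hasDerivAt (s a : ℝ) (h1 : 0 < 1 + a) (hn : 0 < n1f s a) :
    HasDerivAt (G2f s)
      ((8 * s ^ 2 / ((n1f s a) ^ 3 * (1 + a) ^ 2)) * ((3 * a + 1) * s - 3 * a - 3)) a := by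
  have hne : n1f s a ≠ 0 := hn.ne'
  have h1ne : (2 : ℝ) * (1 + a) ≠ 0 := by positivity
  have t1 := (hasDerivAt_const a (4 : ℝ)).div (two_one_add_hasDerivAt a) h1ne
  have t2 := (hasDerivAt_const a (2 * (1 - s))).div (n1f_hasDerivAt s a) hne
  have t3 := (hasDerivAt_const a (4 * s * (1 - s))).div ((n1f_hasDerivAt s a).pow 2)
      (pow_ne_zero 2 hne)
  have H := (t1.sub t2).sub t3
  unfold G2f
  refine H.congr_deriv ?_
  have h1' : (1 : ℝ) + a ≠ 0 := h1.ne'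
  have hn' : (1 + a) + s * (1 - a) ≠ 0 := by simpa [n1f] using hne
  simp only [n1f, Pi.pow_apply]
  push_cast
  field_simp
  ring

lemma Gf_hasDerivAt (s a : ℝ) (h1 : 0 < 1 + a) (h2 : 0 < 1 - a) (hs : s < 1)
    (hn : 0 < n1f s a) : HasDerivAt (Gf s) (G1f s a) a := by
  have hB : 0 < 1 - s := sub_pos.mpr hs
  have hne : n1f s a ≠ 0 := hn.ne'
  have hu : HasDerivAt (fun a : ℝ => 2 * (1 + a) / n1f s a)
      ((2 * n1f s a - 2 * (1 + a) * (1 - s)) / n1f s a ^ 2) a :=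
    (two_one_add_hasDerivAt a).div (n1f_hasDerivAt s a) hne
  have hupos : 0 < 2 * (1 + a) / n1f s a := by positivity
  have hlog1 := hu.log hupos.ne'
  have hT1 := (two_one_add_hasDerivAt a).mul hlog1
  have hv : HasDerivAt (fun a : ℝ => 2 * (1 - a)) (2 * (-1)) a :=
    ((hasDerivAt_id a).const_sub (1 : ℝ)).const_mul 2
  have hw2 : HasDerivAt (fun a : ℝ => (1 - s) * (1 - a)) ((1 - s) * (-1)) a :=
    ((hasDerivAt_id a).const_sub (1 : ℝ)).const_mul (1 - s)
  have hw2ne : (1 - s) * (1 - a) ≠ 0 := by positivity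
  have hw : HasDerivAt (fun a : ℝ => 2 * (1 - a) / ((1 - s) * (1 - a)))
      ((2 * (-1) * ((1 - s) * (1 - a)) - 2 * (1 - a) * ((1 - s) * (-1))) /
        ((1 - s) * (1 - a)) ^ 2) a :=
    hv.div hw2 hw2ne
  have hwpos : 0 < 2 * (1 - a) / ((1 - s) * (1 - a)) := by positivity
  have hlog2 := hw.log hwpos.ne'
  have hT2 := hv.mul hlog2
  have H := hT1.add hT2
  unfold Gf G1f
  refine H.congr_deriv ?_
  have h1' : (1 : ℝ) + a ≠ 0 := h1.ne'
  have h2' : (1 : ℝ) - a ≠ 0 := h2.ne'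
  have hB' : (1 : ℝ) - s ≠ 0 := hB.ne'
  have hn' : (1 + a) + s * (1 - a) ≠ 0 := by simpa [n1f] using hne
  set L1 := Real.log (2 * (1 + a) / n1f s a) with hL1
  set L2 := Real.log (2 * (1 - a) / ((1 - s) * (1 - a))) with hL2
  simp only [n1f]
  field_simp
  ring

lemma G1f_hasDerivAt (s a : ℝ) (h1 : 0 < 1 + a) (h2 : 0 < 1 - a) (hs : s < 1)
    (hn : 0 < n1f s a) : HasDerivAt (G1f s) (G2f s a) a := by
  have hB : 0 < 1 - s := sub_pos.mpr hs
  have hne : n1f s a ≠ 0 := hn.ne'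
  have hu : HasDerivAt (fun a : ℝ => 2 * (1 + a) / n1f s a)
      ((2 * n1f s a - 2 * (1 + a) * (1 - s)) / n1f s a ^ 2) a :=
    (two_one_add_hasDerivAt a).div (n1f_hasDerivAt s a) hne
  have hupos : 0 < 2 * (1 + a) / n1f s a := by positivity
  have hlog1 := (hu.log hupos.ne').const_mul (2 : ℝ)
  have hq := (hasDerivAt_const a (4 * s)).div (n1f_hasDerivAt s a) hne
  have hv : HasDerivAt (fun a : ℝ => 2 * (1 - a)) (2 * (-1)) a :=
    ((hasDerivAt_id a).const_sub (1 : ℝ)).const_mul 2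
  have hw2 : HasDerivAt (fun a : ℝ => (1 - s) * (1 - a)) ((1 - s) * (-1)) a :=
    ((hasDerivAt_id a).const_sub (1 : ℝ)).const_mul (1 - s)
  have hw2ne : (1 - s) * (1 - a) ≠ 0 := by positivity
  have hw : HasDerivAt (fun a : ℝ => 2 * (1 - a) / ((1 - s) * (1 - a)))
      ((2 * (-1) * ((1 - s) * (1 - a)) - 2 * (1 - a) * ((1 - s) * (-1))) /
        ((1 - s) * (1 - a)) ^ 2) a :=
    hv.div hw2 hw2ne
  have hwpos : 0 < 2 * (1 - a) / ((1 - s) * (1 - a)) := by positivity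
  have hlog2 := (hw.log hwpos.ne').const_mul (2 : ℝ)
  have H := (hlog1.add hq).sub hlog2
  unfold G1f G2f
  refine H.congr_deriv ?_
  have h1' : (1 : ℝ) + a ≠ 0 := h1.ne'
  have h2' : (1 : ℝ) - a ≠ 0 := h2.ne'
  have hB' : (1 : ℝ) - s ≠ 0 := hB.ne'
  have hn' : (1 + a) + s * (1 - a) ≠ 0 := by simpa [n1f] using hne
  simp only [n1f]
  field_simp
  ring

lemma sign_le (s a : ℝ) (h1 : 0 < 1 + a) (h2 : 0 < 1 - a) (hs : s < 1)
    (hn : 0 < n1f s a) :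
    (8 * s ^ 2 / ((n1f s a) ^ 3 * (1 + a) ^ 2)) * ((3 * a + 1) * s - 3 * a - 3) ≤ 0 := by
  have hfac : (3 * a + 1) * s - 3 * a - 3 ≤ 0 := by
    have hn' : 0 < (1 + a) + s * (1 - a) := hn
    rcases le_or_gt 0 s with hsp | hsn
    · nlinarith [mul_pos h1 (sub_pos.mpr hs)]
    · rcases le_or_gt 0 (3 * a + 1) with h3p | h3n
      · nlinarith [mul_nonpos_of_nonneg_of_nonpos h3p hsn.le]
      · by_contra hcon
        push_neg at hcon
        nlinarith [mul_pos hcon h2, mul_pos (neg_pos.mpr h3n) hn']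
  have hden : 0 < (n1f s a) ^ 3 * (1 + a) ^ 2 := mul_pos (pow_pos hn 3) (pow_pos h1 2)
  have hpos : 0 ≤ 8 * s ^ 2 / ((n1f s a) ^ 3 * (1 + a) ^ 2) :=
    div_nonneg (by positivity) hden.le
  exact mul_nonpos_of_nonneg_of_nonpos hpos hfac

theorem stmt12 (s α₀ : ℝ) (hα₀ : -1 ≤ α₀) (hα₀1 : α₀ < 1) (hs1 : s < 1)
    (hs2 : ∀ a ∈ Set.Ioo α₀ (1 : ℝ), -((1 + a) / (1 - a)) < s) :
    (∀ a ∈ Set.Ioo α₀ (1 : ℝ),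
      HasDerivAt (G2f s)
        ((8 * s ^ 2 / ((n1f s a) ^ 3 * (1 + a) ^ 2)) * ((3 * a + 1) * s - 3 * a - 3)) a ∧
      (8 * s ^ 2 / ((n1f s a) ^ 3 * (1 + a) ^ 2)) * ((3 * a + 1) * s - 3 * a - 3) ≤ 0) ∧
    G2f s 1 = s ^ 2 ∧
    ConvexOn ℝ (Set.Ioo α₀ 1) (Gf s) := by
  have key : ∀ a ∈ Set.Ioo α₀ (1 : ℝ), 0 < 1 + a ∧ 0 < 1 - a ∧ 0 < n1f s a := by
    intro a ha
    obtain ⟨ha1, ha2⟩ := ha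
    have h1 : 0 < 1 + a := by linarith
    have h2 : 0 < 1 - a := by linarith
    have h3 := hs2 a ⟨ha1, ha2⟩
    refine ⟨h1, h2, ?_⟩
    have hlt : -((1 + a) / (1 - a)) * (1 - a) < s * (1 - a) :=
      mul_lt_mul_of_pos_right h3 h2
    rw [neg_mul, div_mul_cancel₀ _ h2.ne'] at hlt
    unfold n1f
    linarith
  have hpos1 : ∀ a, α₀ < a → a ≤ 1 → 0 < 1 + a ∧ 0 < n1f s a := by
    intro a h h'
    have h1 : 0 < 1 + a := by linarith
    rcases eq_or_lt_of_le h' with rfl | hlt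
    · refine ⟨h1, ?_⟩
      unfold n1f
      norm_num
    · exact ⟨h1, (key a ⟨h, hlt⟩).2.2⟩
  refine ⟨?_, G2f_one s, ?_⟩
  · intro a ha
    obtain ⟨h1, h2, hn⟩ := key a ha
    exact ⟨G2f_hasDerivAt s a h1 hn, sign_le s a h1 h2 hs1 hn⟩
  · refine convexOn_of_hasDerivWithinAt2_nonneg (convex_Ioo _ _)
      (f' := G1f s) (f'' := G2f s) ?_ ?_ ?_ ?_
    · intro a ha
      obtain ⟨h1, h2, hn⟩ := key a ha
      exact (Gf_hasDerivAt s a h1 h2 hs1 hn).continuousAt.continuousWithinAt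
    · rw [interior_Ioo]
      intro a ha
      obtain ⟨h1, h2, hn⟩ := key a ha
      exact (Gf_hasDerivAt s a h1 h2 hs1 hn).hasDerivWithinAt
    · rw [interior_Ioo]
      intro a ha
      obtain ⟨h1, h2, hn⟩ := key a ha
      exact (G1f_hasDerivAt s a h1 h2 hs1 hn).hasDerivWithinAt
    · rw [interior_Ioo]
      intro x hx
      obtain ⟨h1, h2, hn⟩ := key x hx
      have hanti : AntitoneOn (G2f s) (Set.Icc x 1) := by
        refine antitoneOn_of_deriv_nonpos (convex_Icc _ _) ?_ ?_ ?_
        · intro y hy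
          obtain ⟨hy1, hyn⟩ := hpos1 y (lt_of_lt_of_le hx.1 hy.1) hy.2
          exact (G2f_hasDerivAt s y hy1 hyn).continuousAt.continuousWithinAt
        · rw [interior_Icc]
          intro y hy
          obtain ⟨hy1, hy2, hyn⟩ := key y ⟨lt_trans hx.1 hy.1, hy.2⟩
          exact (G2f_hasDerivAt s y hy1 hyn).differentiableAt.differentiableWithinAt
        · rw [interior_Icc]
          intro y hy
          obtain ⟨hy1, hy2, hyn⟩ := key y ⟨lt_trans hx.1 hy.1, hy.2⟩
          rw [(G2f_hasDerivAt s y hy1 hyn).deriv]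
          exact sign_le s y hy1 hy2 hs1 hyn
      have h01 : G2f s 1 ≤ G2f s x :=
        hanti (Set.left_mem_Icc.mpr hx.2.le) (Set.right_mem_Icc.mpr hx.2.le) hx.2.le
      have hval : G2f s 1 = s ^ 2 := G2f_one s
      nlinarith [sq_nonneg s]
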